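/- arXiv:1401.6061 — 2 statements merged into one kernel-verified Lean document; each statement's English description precedes it below -/
import Mathlib

section
/- For all A, B ⊆ ω, if D(A,B) holds, then I(A) ∩ I(B) = ∅; that is, no set C ⊆ ω is interlaced with both A and B. -/
open Cardinal Set

namespace GamePaper

universe u

/-! ### Gale–Stewart style games.
A play is a sequence `p : ℕ → M`; player ONE (resp. White) moves at even indices,
player TWO (resp. Black) at odd indices.  A strategy for a player is a function
assigning to the finite sequence of the opponent's prior moves the player's next move. -/

/-- ONE's moves in the play `p` are obtained from the strategy `σ` applied to the
list of TWO's prior moves. -/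
def OneFollows {M : Type*} (σ : List M → M) (p : ℕ → M) : Prop :=
  ∀ n : ℕ, p (2 * n) = σ (List.ofFn fun i : Fin n => p (2 * (i : ℕ) + 1))

/-- TWO's moves in the play `p` are obtained from the strategy `σ` applied to the
list of ONE's prior moves. -/
def TwoFollows {M : Type*} (σ : List M → M) (p : ℕ → M) : Prop :=
  ∀ n : ℕ, p (2 * n + 1) = σ (List.ofFn fun i : Fin (n + 1) => p (2 * (i : ℕ)))

/-- ONE has a winning strategy in the Gale–Stewart game `GS_Λ(A)`. -/
def OneWinsGS {Λ : Type*} (A : Set (ℕ → Λ)) : Prop :=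
  ∃ σ : List Λ → Λ, ∀ p : ℕ → Λ, OneFollows σ p → p ∈ A

/-- TWO has a winning strategy in the Gale–Stewart game `GS_Λ(A)`. -/
def TwoWinsGS {Λ : Type*} (A : Set (ℕ → Λ)) : Prop :=
  ∃ σ : List Λ → Λ, ∀ p : ℕ → Λ, TwoFollows σ p → p ∉ A

/-- ONE has a winning strategy in the multiboard game `GS_Λ(A, K)`:
moves are functions `K → Λ`, and ONE wins a play if on some board `ξ` the induced
play belongs to `A`. -/
def OneWinsGSBoards (Λ K : Type*) (A : Set (ℕ → Λ)) : Prop :=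
  ∃ σ : List (K → Λ) → K → Λ, ∀ q : ℕ → K → Λ, OneFollows σ q →
    ∃ ξ : K, (fun n => q n ξ) ∈ A

/-- TWO has a winning strategy in the multiboard game `GS_Λ(A, K)`. -/
def TwoWinsGSBoards (Λ K : Type*) (A : Set (ℕ → Λ)) : Prop :=
  ∃ σ : List (K → Λ) → K → Λ, ∀ q : ℕ → K → Λ, TwoFollows σ q →
    ∀ ξ : K, (fun n => q n ξ) ∉ A

/-- The multiboard Gale–Stewart game `GS_Λ(A, K)` is determined. -/
def GSBoardsDetermined (Λ K : Type*) (A : Set (ℕ → Λ)) : Prop :=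
  OneWinsGSBoards Λ K A ∨ TwoWinsGSBoards Λ K A

/-- `D(λ, κ)` : every multiboard Gale–Stewart game on `κ` boards with moves in `λ`
is determined. -/
def DProp (Λ K : Type*) : Prop :=
  ∀ A : Set (ℕ → Λ), GSBoardsDetermined Λ K A

/-! ### Laver games -/

/-- ONE wins the play `q` of the Laver game `LG(Λ, K)`. -/
def LaverWin (Λ K : Type*) (q : ℕ → K → Λ) : Prop :=
  ∀ S : Set (ℕ → Λ), ¬ TwoWinsGS S → ∃ ξ : K, (fun n => q n ξ) ∈ S

/-- `L(λ, κ)` : ONE has a winning strategy in the Laver game `LG(Λ, K)`. -/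
def OneWinsLG (Λ K : Type*) : Prop :=
  ∃ σ : List (K → Λ) → K → Λ, ∀ q : ℕ → K → Λ, OneFollows σ q → LaverWin Λ K q

/-- TWO has a winning strategy in the Laver game `LG(Λ, K)`. -/
def TwoWinsLG (Λ K : Type*) : Prop :=
  ∃ σ : List (K → Λ) → K → Λ, ∀ q : ℕ → K → Λ, TwoFollows σ q → ¬ LaverWin Λ K q

/-! ### Ulam's cut-and-choose games `UG(λ, κ)`.
White first chooses `f 0 : K → Λ`; thereafter Black chooses `(ξ (2n), f (2n+1))` and
White responds with `(ξ (2n+1), f (2n+2))`.  White wins iff for some `α : K`,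
`f n α = ξ n` for all `n`. -/

/-- A strategy for White in `UG(Λ, K)`: a first move, and a response to each finite
sequence of Black's prior moves. -/
structure UGWhiteStrategy (Λ K : Type*) where
  first : K → Λ
  move : List (Λ × (K → Λ)) → Λ × (K → Λ)

/-- White's moves in the play `(ξ, f)` of `UG(Λ, K)` follow the strategy `σ`. -/
def UGWhiteFollows {Λ K : Type*} (σ : UGWhiteStrategy Λ K) (ξ : ℕ → Λ) (f : ℕ → K → Λ) :
    Prop :=
  f 0 = σ.first ∧
  ∀ n : ℕ, (ξ (2 * n + 1), f (2 * n + 2)) =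
    σ.move (List.ofFn fun i : Fin (n + 1) => (ξ (2 * (i : ℕ)), f (2 * (i : ℕ) + 1)))

/-- `U(λ, κ)` : White has a winning strategy in the cut-and-choose game `UG(Λ, K)`. -/
def WhiteWinsUG (Λ K : Type*) : Prop :=
  ∃ σ : UGWhiteStrategy Λ K, ∀ (ξ : ℕ → Λ) (f : ℕ → K → Λ),
    UGWhiteFollows σ ξ f → ∃ α : K, ∀ n : ℕ, f n α = ξ n

/-! ### Ideals and the game `G(J)` -/

/-- `J` is an ideal of subsets: nonempty, closed under binary unions and subsets. -/
def IsIdeal {S : Type*} (J : Set (Set S)) : Prop :=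
  J.Nonempty ∧ (∀ A B : Set S, A ∈ J → B ∈ J → A ∪ B ∈ J) ∧
    ∀ A B : Set S, B ∈ J → A ⊆ B → A ∈ J

/-- `J` is atomless: every `J`-positive set splits into two disjoint `J`-positive sets. -/
def IsAtomless {S : Type*} (J : Set (Set S)) : Prop :=
  ∀ X : Set S, X ∉ J → ∃ A B : Set S, A ∪ B = X ∧ Disjoint A B ∧ A ∉ J ∧ B ∉ J

/-- Legality of White's `n`-th move in the game `G(J)` (White plays `W n`,
Black plays `B n`). -/
def GJWhiteLegal {S : Type*} (J : Set (Set S)) (W B : ℕ → Set S) : ℕ → Prop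
  | 0 => W 0 ∉ J
  | n + 1 => W (n + 1) ∉ J ∧ W (n + 1) ⊆ B n

/-- Legality of Black's `n`-th move in the game `G(J)`. -/
def GJBlackLegal {S : Type*} (J : Set (Set S)) (W B : ℕ → Set S) (n : ℕ) : Prop :=
  B n ∉ J ∧ B n ⊆ W n

/-- Black has a winning strategy in the game `G(J)`: a strategy `τ` such that in any
play in which Black follows `τ`, Black's moves are legal as long as White's have been,
and if White always moves legally then `⋂ n, B n` is nonempty. -/
def BlackWinsGJ {S : Type*} (J : Set (Set S)) : Prop :=
  ∃ τ : List (Set S) → Set S,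
    ∀ W B : ℕ → Set S,
      (∀ n : ℕ, B n = τ (List.ofFn fun i : Fin (n + 1) => W (i : ℕ))) →
      (∀ n : ℕ, (∀ k ≤ n, GJWhiteLegal J W B k) → GJBlackLegal J W B n) ∧
      ((∀ n : ℕ, GJWhiteLegal J W B n) → (⋂ n, B n).Nonempty)

/-- The ideal `J` on `K` witnesses `I(λ, κ)`: it is a proper free ideal, `λ⁺`-complete,
every positive set has a partition into `λ` many disjoint positive sets, and there is a
dense family in `J⁺` closed under countable descending intersections (nonempty). -/
def IdealWitness (Λ K : Type*) (J : Set (Set K)) : Prop :=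
  IsIdeal J ∧ J ≠ Set.univ ∧ ⋃₀ J = Set.univ ∧
  (∀ A : Λ → Set K, (∀ i, A i ∈ J) → (⋃ i, A i) ∈ J) ∧
  (∀ X : Set K, X ∉ J → ∃ P : Λ → Set K, (⋃ i, P i) = X ∧
      (∀ i j : Λ, i ≠ j → Disjoint (P i) (P j)) ∧ ∀ i, P i ∉ J) ∧
  ∃ F : Set (Set K), (∀ Y ∈ F, Y ∉ J) ∧ (∀ X : Set K, X ∉ J → ∃ Y ∈ F, Y ⊆ X) ∧
    ∀ Xs : ℕ → Set K, (∀ n, Xs n ∈ F) → (∀ n, Xs (n + 1) ⊆ Xs n) → (⋂ n, Xs n).Nonempty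

/-- `I(λ, κ)` : some ideal on `K` witnesses the above. -/
def IProp (Λ K : Type*) : Prop := ∃ J : Set (Set K), IdealWitness Λ K J

/-! ### The Banach–Mazur game and box products -/

/-- Legality of White's `n`-th move in the Banach–Mazur game (White plays the sets of
even index of the play `p`). -/
def BMWhiteLegal {X : Type*} [TopologicalSpace X] (p : ℕ → Set X) : ℕ → Prop
  | 0 => IsOpen (p 0) ∧ (p 0).Nonempty
  | n + 1 => IsOpen (p (2 * n + 2)) ∧ (p (2 * n + 2)).Nonempty ∧ p (2 * n + 2) ⊆ p (2 * n + 1)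

/-- Legality of Black's `n`-th move in the Banach–Mazur game. -/
def BMBlackLegal {X : Type*} [TopologicalSpace X] (p : ℕ → Set X) (n : ℕ) : Prop :=
  IsOpen (p (2 * n + 1)) ∧ (p (2 * n + 1)).Nonempty ∧ p (2 * n + 1) ⊆ p (2 * n)

/-- Black has a winning strategy in the Banach–Mazur game `BM(X)`: a strategy `τ` such
that in any play where Black follows `τ`, Black's moves are legal as long as White's
have been, and if White always moves legally then the intersection of the play is
nonempty. -/
def BlackWinsBM (X : Type*) [TopologicalSpace X] : Prop :=
  ∃ τ : List (Set X) → Set X,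
    ∀ p : ℕ → Set X,
      (∀ n : ℕ, p (2 * n + 1) = τ (List.ofFn fun i : Fin (n + 1) => p (2 * (i : ℕ)))) →
      (∀ n : ℕ, (∀ k ≤ n, BMWhiteLegal p k) → BMBlackLegal p n) ∧
      ((∀ n : ℕ, BMWhiteLegal p n) → (⋂ n, p n).Nonempty)

/-- The box product topology on `ι → X`: generated by boxes `∏ i, U i` with all
`U i` open. -/
def boxTopology (ι X : Type*) [TopologicalSpace X] : TopologicalSpace (ι → X) :=
  TopologicalSpace.generateFrom
    {S : Set (ι → X) | ∃ U : ι → Set X, (∀ i, IsOpen (U i)) ∧ S = Set.pi Set.univ U}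

/-- `𝓑` is a π-base for `X`: a family of nonempty open sets such that every nonempty
open set contains a member of the family. -/
def IsPiBase (X : Type*) [TopologicalSpace X] (𝓑 : Set (Set X)) : Prop :=
  (∀ V ∈ 𝓑, IsOpen V ∧ V.Nonempty) ∧
    ∀ U : Set X, IsOpen U → U.Nonempty → ∃ V ∈ 𝓑, V ⊆ U

/-! ### Interlaced sets -/

/-- `A` and `B` are interlaced: both are infinite and for some `k` the increasing
enumerations of `A \ k` and `B \ k` satisfy `a₀ < b₀ < a₁ < b₁ < ⋯`. -/
def Interlaced (A B : Set ℕ) : Prop :=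
  A.Infinite ∧ B.Infinite ∧ ∃ k : ℕ, ∀ n : ℕ,
    Nat.nth (fun m => m ∈ A ∧ k ≤ m) n < Nat.nth (fun m => m ∈ B ∧ k ≤ m) n ∧
    Nat.nth (fun m => m ∈ B ∧ k ≤ m) n < Nat.nth (fun m => m ∈ A ∧ k ≤ m) (n + 1)

/-- `B(x) = {x(2n) + x(2n+1) : n < ω, x(2n) > 0}`. -/
def Bx (x : ℕ → ℕ) : Set ℕ :=
  {m | ∃ n : ℕ, 0 < x (2 * n) ∧ m = x (2 * n) + x (2 * n + 1)}

/-- `Y(𝓑) = {x ∈ ωω : B(x) ∉ 𝓑}`. -/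
def YFam (𝓑 : Set (Set ℕ)) : Set (ℕ → ℕ) := {x | Bx x ∉ 𝓑}

/-- `B^F_i = {F(2n)(i) + F(2n+1)(i) : n < ω, F(2n)(i) > 0}` for a play `F` of `G^ω`. -/
def BF (F : ℕ → ℕ → ℕ) (i : ℕ) : Set ℕ :=
  {m | ∃ n : ℕ, 0 < F (2 * n) i ∧ m = F (2 * n) i + F (2 * n + 1) i}

/-- `D(A,B)` : `A` or `B` is finite, or for each `k` there are `a₁ < a₂ < a₃` in `A \ k`
with no element of `B` strictly between `a₁` and `a₃`. -/
def DRel (A B : Set ℕ) : Prop :=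
  A.Finite ∨ B.Finite ∨ ∀ k : ℕ, ∃ a₁ a₂ a₃ : ℕ,
    a₁ ∈ A ∧ a₂ ∈ A ∧ a₃ ∈ A ∧ k ≤ a₁ ∧ a₁ < a₂ ∧ a₂ < a₃ ∧
    ¬ ∃ b ∈ B, a₁ < b ∧ b < a₃

/-- Lemma (paper Lemma 32): if `D(A,B)` holds then `I(A) ∩ I(B) = ∅`: no set is
interlaced with both `A` and `B`. -/
theorem statement_17 (A B : Set ℕ) (h : DRel A B) :
    {C : Set ℕ | Interlaced A C} ∩ {C : Set ℕ | Interlaced B C} = ∅ := by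
  rw [Set.eq_empty_iff_forall_notMem]
  rintro C ⟨⟨hAinf, hCinf, kA, hA⟩, ⟨hBinf, hCinf', kB, hB⟩⟩
  rcases h with hAf | hBf | hD
  · exact hAinf hAf
  · exact hBinf hBf
  set p : ℕ → Prop := fun m => m ∈ A ∧ kA ≤ m with hp_def
  set q : ℕ → Prop := fun m => m ∈ C ∧ kA ≤ m with hq_def
  set p' : ℕ → Prop := fun m => m ∈ B ∧ kB ≤ m with hp'_def
  set q' : ℕ → Prop := fun m => m ∈ C ∧ kB ≤ m with hq'_def
  have hinf : ∀ (X : Set ℕ) (k : ℕ), X.Infinite →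
      {m | m ∈ X ∧ k ≤ m}.Infinite := by
    intro X k hX
    exact (hX.diff (Set.finite_Iio k)).mono
      (fun x hx => ⟨hx.1, not_lt.mp hx.2⟩)
  have hp : (setOf p).Infinite := hinf A kA hAinf
  have hq : (setOf q).Infinite := hinf C kA hCinf
  have hp' : (setOf p').Infinite := hinf B kB hBinf
  have hq' : (setOf q').Infinite := hinf C kB hCinf'
  obtain ⟨a₁, a₂, a₃, ha₁A, ha₂A, ha₃A, hk₁, h12, h23, hno⟩ := hD (max kA kB)
  -- indices of a₁, a₂, a₃ in the enumeration of p
  obtain ⟨i, -, hi⟩ := Nat.exists_lt_card_nth_eq (p := p)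
    ⟨ha₁A, le_trans (le_max_left _ _) hk₁⟩
  obtain ⟨j, -, hj⟩ := Nat.exists_lt_card_nth_eq (p := p)
    ⟨ha₂A, le_trans (le_max_left _ _) (hk₁.trans h12.le)⟩
  obtain ⟨l, -, hl⟩ := Nat.exists_lt_card_nth_eq (p := p)
    ⟨ha₃A, le_trans (le_max_left _ _) (hk₁.trans (h12.trans h23).le)⟩
  have hij : i < j := (Nat.nth_strictMono hp).lt_iff_lt.mp (by rw [hi, hj]; exact h12)
  have hjl : j < l := (Nat.nth_strictMono hp).lt_iff_lt.mp (by rw [hj, hl]; exact h23)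
  have hil : i + 2 ≤ l := by omega
  set c : ℕ := Nat.nth q i with hc_def
  set c' : ℕ := Nat.nth q (i + 1) with hc'_def
  have hcC : c ∈ C := (Nat.nth_mem_of_infinite hq i).1
  have hc'C : c' ∈ C := (Nat.nth_mem_of_infinite hq (i + 1)).1
  have h1c : a₁ < c := hi ▸ (hA i).1
  have hcc' : c < c' := lt_trans (hA i).2 (hA (i + 1)).1
  have hc'3 : c' < a₃ := by
    calc c' < Nat.nth p (i + 2) := (hA (i + 1)).2
    _ ≤ Nat.nth p l := (Nat.nth_strictMono hp).monotone hil
    _ = a₃ := hl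
  -- c, c' as elements of q'
  have hkBc : kB ≤ c := le_trans (le_trans (le_max_right _ _) hk₁) h1c.le
  obtain ⟨m, -, hm⟩ := Nat.exists_lt_card_nth_eq (p := q') ⟨hcC, hkBc⟩
  obtain ⟨m', -, hm'⟩ := Nat.exists_lt_card_nth_eq (p := q')
    ⟨hc'C, hkBc.trans hcc'.le⟩
  have hmm' : m < m' := (Nat.nth_strictMono hq').lt_iff_lt.mp
    (by rw [hm, hm']; exact hcc')
  set b : ℕ := Nat.nth p' (m + 1) with hb_def
  have hbB : b ∈ B := (Nat.nth_mem_of_infinite hp' (m + 1)).1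
  have hcb : c < b := hm ▸ (hB m).2
  have hbc' : b < c' := by
    calc b < Nat.nth q' (m + 1) := (hB (m + 1)).1
    _ ≤ Nat.nth q' m' := (Nat.nth_strictMono hq').monotone hmm'
    _ = c' := hm'
  exact hno ⟨b, hbB, h1c.trans hcb, hbc'.trans hc'3⟩

end GamePaper
end

section
/- There is a set S ⊆ ω{0,1} (a set of functions ω → {0,1}) such that the κ-board Gale–Stewart game GS_2(S,κ) is undetermined for every nonzero cardinal κ with 2^κ ≤ 2^ℵ0. -/
open Cardinal Set

namespace GamePaper

universe u

private def fixA (l M : List (Fin 2) → Fin 2) : ℕ → Fin 2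
  | n => l (List.ofFn fun i : Fin n =>
      M (List.ofFn fun j : Fin ((i : ℕ) + 1) => fixA l M (j : ℕ)))
termination_by n => n
decreasing_by exact Nat.lt_of_lt_of_le j.isLt i.isLt

private theorem fixA_unique (l M : List (Fin 2) → Fin 2) (a b : ℕ → Fin 2)
    (hb : ∀ n : ℕ, b n = M (List.ofFn fun j : Fin (n + 1) => a (j : ℕ)))
    (ha : ∀ n : ℕ, a n = l (List.ofFn fun i : Fin n => b (i : ℕ))) :
    ∀ n, a n = fixA l M n := by
  intro n
  induction n using Nat.strong_induction_on with
  | _ n ih =>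
    rw [ha n, fixA]
    congr 1
    apply congrArg
    funext i
    rw [hb (i : ℕ)]
    congr 1
    apply congrArg
    funext j
    exact ih (j : ℕ) (Nat.lt_of_lt_of_le j.isLt i.isLt)

private theorem mk_strat : #(List (Fin 2) → Fin 2) = Cardinal.continuum := by
  rw [← Cardinal.power_def, Cardinal.mk_list_eq_aleph0, Cardinal.mk_fin]
  norm_num

private theorem mk_seq : #(ℕ → Fin 2) = Cardinal.continuum := by
  rw [← Cardinal.power_def, Cardinal.mk_nat, Cardinal.mk_fin]
  norm_num

/-- Lemma (paper Lemma 37): there is `S ⊆ ω2` such that `GS₂(S,κ)` is undetermined for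
every nonzero cardinal `κ` with `2^κ ≤ 2^ℵ₀`. -/
theorem statement_19 :
    ∃ S : Set (ℕ → Fin 2), ∀ K : Type, #K ≠ 0 →
      (2 : Cardinal) ^ #K ≤ Cardinal.continuum →
      ¬ GSBoardsDetermined (Fin 2) K S := by
  classical
  -- a well-order on single-board strategies with small initial segments
  obtain ⟨r, wo, hr⟩ := Cardinal.ord_eq (List (Fin 2) → Fin 2)
  haveI := wo
  have hr' : Cardinal.ord Cardinal.continuum = Ordinal.type r := by rw [← mk_strat]; exact hr
  have hseg : ∀ x : List (Fin 2) → Fin 2,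
      #({l | r l x} : Set (List (Fin 2) → Fin 2)) < Cardinal.continuum := by
    intro x
    have h := Cardinal.card_typein_lt (r := r) x hr
    rw [Ordinal.card_typein, mk_strat] at h
    exact h
  -- choose the ONE-side witness sequences, avoiding all fixed points of earlier maps
  have hax : ∀ M : List (Fin 2) → Fin 2, ∃ a : ℕ → Fin 2,
      ∀ l, (r l M ∨ l = M) → a ≠ fixA l M := by
    intro M
    have hsm : #((fun l => fixA l M) '' ({l | r l M} ∪ {M})) < Cardinal.continuum := by
      refine lt_of_le_of_lt Cardinal.mk_image_le ?_
      refine lt_of_le_of_lt (Cardinal.mk_union_le _ _) ?_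
      rw [Cardinal.mk_singleton]
      exact Cardinal.add_lt_of_lt Cardinal.aleph0_le_continuum (hseg M)
        (lt_of_lt_of_le Cardinal.one_lt_aleph0 Cardinal.aleph0_le_continuum)
    have hex : ∃ a : ℕ → Fin 2, a ∉ (fun l => fixA l M) '' ({l | r l M} ∪ {M}) := by
      by_contra h
      push_neg at h
      have huniv : (fun l => fixA l M) '' ({l | r l M} ∪ {M}) = Set.univ :=
        Set.eq_univ_of_forall h
      rw [huniv, Cardinal.mk_univ, mk_seq] at hsm
      exact lt_irrefl _ hsm
    obtain ⟨a, ha⟩ := hex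
    refine ⟨a, fun l hl heq => ha ⟨l, ?_, heq.symm⟩⟩
    rcases hl with h | h
    · exact Or.inl h
    · exact Or.inr (by simp [h])
  choose aW haW using hax
  -- TWO-side responses
  set W : (List (Fin 2) → Fin 2) → ℕ → Fin 2 :=
    fun M n => M (List.ofFn fun j : Fin (n + 1) => aW M (j : ℕ)) with hW
  refine ⟨{x | ∃ M : List (Fin 2) → Fin 2,
      (∀ n : ℕ, x (2 * n) = aW M n) ∧ (∀ n : ℕ, x (2 * n + 1) = W M n)}, ?_⟩
  intro K hK0 hK2 hdet
  have hne : Nonempty K := Cardinal.mk_ne_zero_iff.mp hK0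
  obtain ⟨ξ₀⟩ := hne
  rcases hdet with ⟨σ, hσ⟩ | ⟨τ, hτ⟩
  · -- ONE cannot have a winning strategy
    -- the board-column maps
    set lft : K → (List (Fin 2) → Fin 2) :=
      fun ξ lst => σ (lst.map fun v => fun _ : K => v) ξ with hlft
    -- the run where TWO plays the constant function with bits u
    set Q : (ℕ → Fin 2) → ℕ → K → Fin 2 := fun u n =>
      if n % 2 = 0 then σ (List.ofFn fun i : Fin (n / 2) => fun _ : K => u (i : ℕ))
      else fun _ : K => u (n / 2) with hQ
    have hQe : ∀ (u : ℕ → Fin 2) (n : ℕ),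
        Q u (2 * n) = σ (List.ofFn fun i : Fin n => fun _ : K => u (i : ℕ)) := by
      intro u n
      have h1 : (2 * n) % 2 = 0 := by omega
      have h2 : (2 * n) / 2 = n := by omega
      simp only [hQ, h1, h2, if_pos]
      exact congrArg σ (congrArg List.ofFn rfl)
    have hQo : ∀ (u : ℕ → Fin 2) (n : ℕ), Q u (2 * n + 1) = fun _ : K => u n := by
      intro u n
      have h1 : ¬((2 * n + 1) % 2 = 0) := by omega
      have h2 : (2 * n + 1) / 2 = n := by omega
      simp only [hQ, h1, h2, if_neg, not_false_iff]
    have hfol : ∀ u, OneFollows σ (Q u) := by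
      intro u n
      rw [hQe u n]
      refine congrArg σ (congrArg List.ofFn (funext fun i => ?_))
      rw [hQo u (i : ℕ)]
    have hcov : ∀ u : ℕ → Fin 2, ∃ ξ : K, ∃ M, r M (lft ξ) ∧ u = W M := by
      intro u
      obtain ⟨ξ, M, hev, hodd⟩ := hσ (Q u) (hfol u)
      have hu : ∀ n, u n = W M n := by
        intro n
        have h := hodd n
        simp only at h
        rw [hQo u n] at h
        exact h
      have hev' : ∀ n : ℕ, aW M n = lft ξ (List.ofFn fun i : Fin n => u (i : ℕ)) := by
        intro n
        have h := hev n
        simp only at h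
        rw [hQe u n] at h
        rw [hlft]
        simp only [List.map_ofFn]
        exact h.symm
      have hfix : aW M = fixA (lft ξ) M :=
        funext (fixA_unique (lft ξ) M (aW M) u (fun n => hu n) (fun n => hev' n))
      rcases trichotomous_of r (lft ξ) M with h | h | h
      · exact absurd hfix (haW M (lft ξ) (Or.inl h))
      · exact absurd hfix (haW M (lft ξ) (Or.inr h))
      · exact ⟨ξ, M, h, funext hu⟩
    -- cardinality contradiction
    have hcof : #K < (Cardinal.continuum).ord.cof := by
      rcases lt_or_ge #K ℵ₀ with h | h
      · exact h.trans_le ((Ordinal.aleph0_le_cof).mpr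
          (Cardinal.isSuccLimit_ord Cardinal.aleph0_le_continuum))
      · by_contra hc
        push_neg at hc
        have h2 : (2 : Cardinal) ^ #K = Cardinal.continuum := by
          refine le_antisymm hK2 ?_
          calc Cardinal.continuum = 2 ^ ℵ₀ := Cardinal.two_power_aleph0.symm
            _ ≤ 2 ^ #K := Cardinal.power_le_power_left two_ne_zero h
        have h3 : Cardinal.continuum < Cardinal.continuum ^ (Cardinal.continuum.ord.cof) :=
          Cardinal.lt_power_cof Cardinal.aleph0_le_continuum
        have h4 : Cardinal.continuum ^ (Cardinal.continuum.ord.cof) ≤ Cardinal.continuum ^ #K :=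
          Cardinal.power_le_power_left Cardinal.continuum_ne_zero hc
        have h5 : Cardinal.continuum ^ #K = Cardinal.continuum := by
          conv_lhs => rw [← h2]
          rw [← Cardinal.power_mul, Cardinal.mul_eq_self h, h2]
        exact lt_irrefl _ (h3.trans_le (h4.trans h5.le))
    have hKlt : #K < Cardinal.continuum := hcof.trans_le (Ordinal.cof_ord_le _)
    have hsub : (Set.univ : Set (ℕ → Fin 2)) ⊆
        ⋃ ξ : K, W '' {M | r M (lft ξ)} := by
      intro u _
      obtain ⟨ξ, M, hr1, hu⟩ := hcov u
      exact Set.mem_iUnion.mpr ⟨ξ, ⟨M, hr1, hu.symm⟩⟩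
    have hbig : Cardinal.continuum ≤ #(⋃ ξ : K, W '' {M | r M (lft ξ)}) := by
      have h1 := Cardinal.mk_le_mk_of_subset hsub
      rwa [Cardinal.mk_univ, mk_seq] at h1
    have hsmall : #(⋃ ξ : K, W '' {M | r M (lft ξ)}) < Cardinal.continuum := by
      refine lt_of_le_of_lt (Cardinal.mk_iUnion_le _) ?_
      refine Cardinal.mul_lt_of_lt Cardinal.aleph0_le_continuum hKlt ?_
      refine Ordinal.iSup_lt hcof ?_
      intro ξ
      exact lt_of_le_of_lt Cardinal.mk_image_le (hseg (lft ξ))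
    exact absurd hbig (not_le.mpr hsmall)
  · -- TWO cannot have a winning strategy
    set M₀ : List (Fin 2) → Fin 2 :=
      fun lst => τ (lst.map fun v => fun _ : K => v) ξ₀ with hM₀
    set q : ℕ → K → Fin 2 := fun n =>
      if n % 2 = 0 then (fun _ : K => aW M₀ (n / 2))
      else τ (List.ofFn fun i : Fin (n / 2 + 1) => fun _ : K => aW M₀ (i : ℕ)) with hq
    have hqe : ∀ n : ℕ, q (2 * n) = fun _ : K => aW M₀ n := by
      intro n
      have h1 : (2 * n) % 2 = 0 := by omega
      have h2 : (2 * n) / 2 = n := by omega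
      simp only [hq, h1, h2, if_pos]
    have hqo : ∀ n : ℕ,
        q (2 * n + 1) = τ (List.ofFn fun i : Fin (n + 1) => fun _ : K => aW M₀ (i : ℕ)) := by
      intro n
      have h1 : ¬((2 * n + 1) % 2 = 0) := by omega
      have h2 : (2 * n + 1) / 2 = n := by omega
      simp only [hq, h1, h2, if_neg, not_false_iff]
      exact congrArg τ (congrArg List.ofFn rfl)
    have hfol : TwoFollows τ q := by
      intro n
      rw [hqo n]
      refine congrArg τ (congrArg List.ofFn (funext fun i => ?_))
      rw [hqe (i : ℕ)]
    refine hτ q hfol ξ₀ ⟨M₀, fun n => ?_, fun n => ?_⟩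
    · show q (2 * n) ξ₀ = aW M₀ n
      rw [hqe n]
    · show q (2 * n + 1) ξ₀ = W M₀ n
      rw [hqo n, hW, hM₀]
      simp only [List.map_ofFn]
      rfl


end GamePaper
end
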